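/- Let a ∈ C(ℝ,ℝ), let d, 𝔦 ∈ ℕ with 2 ≤ 𝔦 ≤ 2d, let 𝕀 be a neural network with architecture (d, 𝔦, d) and realization equal to the identity on ℝ^d, and let Φ₁, Φ₂ be networks with input and output dimension d, depths L₁, L₂, and architectures (l_{1,0},...,l_{1,L₁}) and (l_{2,0},...,l_{2,L₂}), respectively, with l_{2,L₂-1} ≤ l_{1,L₁-1} + 𝔦. Then there exists a neural network Ψ such that: (i) R_a(Ψ) ∈ C(ℝ^d, ℝ^d); (ii) for all x ∈ ℝ^d, (R_a(Ψ))(x) = (R_a(Φ₂))(x) + ((R_a(Φ₁)) ∘ (R_a(Φ₂)))(x); (iii) the penultimate layer width of Ψ is at most l_{1,L₁-1} + 𝔦; and (iv) P(Ψ) ≤ P(Φ₂) + (½ P(𝕀) + P(Φ₁))². -/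

import Mathlib

/-- A feedforward neural network: `hidden + 1` affine layers (`depth = hidden + 1`),
layer widths `dims 0, dims 1, ..., dims depth`, weights `W k i j` and biases `B k i`
for layer `k` (entries outside the relevant ranges are irrelevant). -/
structure ANN where
  hidden : ℕ
  dims : ℕ → ℕ
  W : ℕ → ℕ → ℕ → ℝ
  B : ℕ → ℕ → ℝ

namespace ANN

/-- The depth (number of affine layers) of a network. -/
def depth (Φ : ANN) : ℕ := Φ.hidden + 1

/-- The affine map of layer `k`. -/
def layer (Φ : ANN) (k : ℕ) (x : ℕ → ℝ) : ℕ → ℝ :=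
  fun i => (∑ j ∈ Finset.range (Φ.dims k), Φ.W k i j * x j) + Φ.B k i

/-- Forward pass through the first `k` layers, each followed by the componentwise
activation `a`. -/
def fwd (a : ℝ → ℝ) (Φ : ANN) : ℕ → (ℕ → ℝ) → (ℕ → ℝ)
  | 0, x => x
  | k + 1, x => fun i => a (Φ.layer k (Φ.fwd a k x) i)

/-- The realization of a network: all hidden layers with activation `a`, and the final
affine layer without activation. -/
def realize (a : ℝ → ℝ) (Φ : ANN) (x : ℕ → ℝ) : ℕ → ℝ :=
  Φ.layer Φ.hidden (Φ.fwd a Φ.hidden x)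

/-- The realization as a function `ℝ^n → ℝ^m`. -/
def realizeFun (a : ℝ → ℝ) (Φ : ANN) (n m : ℕ) (x : Fin n → ℝ) : Fin m → ℝ :=
  fun i => Φ.realize a (fun j => if h : j < n then x ⟨j, h⟩ else 0) i

/-- Number of parameters: `∑_{k=1}^{L} l_k (l_{k-1} + 1)`. -/
def params (Φ : ANN) : ℕ :=
  ∑ k ∈ Finset.range (Φ.hidden + 1), Φ.dims (k + 1) * (Φ.dims k + 1)

/-- The architecture `(l_0, l_1, ..., l_L)` of a network. -/
def arch (Φ : ANN) : List ℕ := (List.range (Φ.depth + 1)).map Φ.dims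

end ANN


namespace ANNAux

open ANN

/-! ### Generic lemmas -/

lemma layer_congr (Φ : ANN) (k : ℕ) {x y : ℕ → ℝ} (h : ∀ j < Φ.dims k, x j = y j) :
    Φ.layer k x = Φ.layer k y := by
  funext i
  unfold ANN.layer
  congr 1
  exact Finset.sum_congr rfl fun j hj => by rw [h j (Finset.mem_range.mp hj)]

lemma fwd_congr (a : ℝ → ℝ) (Φ : ANN) {x y : ℕ → ℝ} (h : ∀ j < Φ.dims 0, x j = y j) :
    ∀ k, 1 ≤ k → Φ.fwd a k x = Φ.fwd a k y := by
  intro k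
  induction k with
  | zero => omega
  | succ k ih =>
    intro _
    rcases Nat.eq_zero_or_pos k with hk | hk
    · subst hk
      funext i
      simp only [ANN.fwd]
      rw [layer_congr Φ 0 h]
    · funext i
      simp only [ANN.fwd]
      rw [ih hk]

lemma realize_congr (a : ℝ → ℝ) (Φ : ANN) {x y : ℕ → ℝ} (h : ∀ j < Φ.dims 0, x j = y j) :
    Φ.realize a x = Φ.realize a y := by
  unfold ANN.realize
  rcases Nat.eq_zero_or_pos Φ.hidden with h0 | h0
  · rw [h0]
    exact layer_congr Φ 0 h
  · rw [fwd_congr a Φ h Φ.hidden h0]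

/-- If some layer has width 0 the realization is constant. -/
lemma realize_const (a : ℝ → ℝ) (Φ : ANN) {t : ℕ} (ht : t ≤ Φ.hidden) (h0 : Φ.dims t = 0)
    (x y : ℕ → ℝ) : Φ.realize a x = Φ.realize a y := by
  have key : ∀ s, Φ.fwd a (t + 1 + s) x = Φ.fwd a (t + 1 + s) y := by
    intro s
    induction s with
    | zero =>
      funext i
      simp only [ANN.fwd, ANN.layer, h0, Finset.range_zero, Finset.sum_empty]
    | succ s ih =>
      have : t + 1 + (s + 1) = (t + 1 + s) + 1 := by omega
      rw [this]
      funext i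
      simp only [ANN.fwd]
      rw [ih]
  unfold ANN.realize
  obtain ⟨s, hs⟩ : ∃ s, Φ.hidden = t + 1 + s ∨ Φ.hidden = t := by
    rcases Nat.lt_or_ge t Φ.hidden with h | h
    · exact ⟨Φ.hidden - t - 1, Or.inl (by omega)⟩
    · exact ⟨0, Or.inr (by omega)⟩
  rcases hs with hs | hs
  · rw [hs, key]
  · subst hs
    apply layer_congr
    intro j hj
    omega

lemma continuous_fwd (a : ℝ → ℝ) (ha : Continuous a) (Φ : ANN) (k : ℕ)
    {X : Type*} [TopologicalSpace X] {f : X → ℕ → ℝ} (hf : Continuous f) :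
    Continuous fun x => Φ.fwd a k (f x) := by
  induction k with
  | zero => exact hf
  | succ k ih =>
    apply continuous_pi
    intro i
    apply ha.comp
    simp only [ANN.layer]
    apply Continuous.add _ continuous_const
    apply continuous_finset_sum
    intro j _
    exact continuous_const.mul ((continuous_apply j).comp ih)

lemma continuous_realizeFun (a : ℝ → ℝ) (ha : Continuous a) (Φ : ANN) (n m : ℕ) :
    Continuous (Φ.realizeFun a n m) := by
  unfold ANN.realizeFun
  apply continuous_pi
  intro i
  have hf : Continuous fun (x : Fin n → ℝ) (j : ℕ) => if h : j < n then x ⟨j, h⟩ else 0 := by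
    apply continuous_pi
    intro j
    by_cases h : j < n
    · simpa [h] using continuous_apply (⟨j, h⟩ : Fin n)
    · simpa [h] using continuous_const
  unfold ANN.realize
  have := continuous_fwd a ha Φ Φ.hidden hf
  simp only [ANN.layer]
  apply Continuous.add _ continuous_const
  apply continuous_finset_sum
  intro j _
  exact continuous_const.mul ((continuous_apply j).comp this)

/-! ### Composition of networks -/

/-- Composition of two networks, merging the last affine layer of `Φ` with the
first affine layer of `Γ`. -/
def comp (Φ Γ : ANN) : ANN where
  hidden := Φ.hidden + Γ.hidden
  dims := fun k => if k ≤ Φ.hidden then Φ.dims k else Γ.dims (k - Φ.hidden)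
  W := fun k i j =>
    if k < Φ.hidden then Φ.W k i j
    else if k = Φ.hidden then ∑ m ∈ Finset.range (Γ.dims 0), Γ.W 0 i m * Φ.W Φ.hidden m j
    else Γ.W (k - Φ.hidden) i j
  B := fun k i =>
    if k < Φ.hidden then Φ.B k i
    else if k = Φ.hidden then
      (∑ m ∈ Finset.range (Γ.dims 0), Γ.W 0 i m * Φ.B Φ.hidden m) + Γ.B 0 i
    else Γ.B (k - Φ.hidden) i

lemma comp_dims_low (Φ Γ : ANN) {k : ℕ} (h : k ≤ Φ.hidden) :
    (comp Φ Γ).dims k = Φ.dims k := by simp [comp, h]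

lemma comp_dims_high (Φ Γ : ANN) {k : ℕ} (h : Φ.hidden < k) :
    (comp Φ Γ).dims k = Γ.dims (k - Φ.hidden) := by
  simp [comp, Nat.not_le.mpr h]

lemma comp_fwd_low (a : ℝ → ℝ) (Φ Γ : ANN) (z : ℕ → ℝ) :
    ∀ k, k ≤ Φ.hidden → (comp Φ Γ).fwd a k z = Φ.fwd a k z := by
  intro k
  induction k with
  | zero => intro _; rfl
  | succ k ih =>
    intro hk
    funext i
    have hk' : k ≤ Φ.hidden := by omega
    have hklt : k < Φ.hidden := by omega
    simp only [ANN.fwd]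
    rw [ih hk']
    simp only [ANN.layer, comp_dims_low Φ Γ hk']
    congr 2
    · apply Finset.sum_congr rfl
      intro j _
      congr 1
      simp [comp, hklt]
    · simp [comp, hklt]

lemma comp_layer_merge (Φ Γ : ANN) (v : ℕ → ℝ) (i : ℕ) :
    (comp Φ Γ).layer Φ.hidden v i = Γ.layer 0 (Φ.layer Φ.hidden v) i := by
  simp only [ANN.layer, comp, lt_self_iff_false, if_false, if_pos rfl, le_refl, if_true]
  simp only [mul_add, Finset.mul_sum, Finset.sum_add_distrib, Finset.sum_mul]
  rw [Finset.sum_comm]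
  ring_nf

lemma comp_layer_high (Φ Γ : ANN) (t : ℕ) (ht : 1 ≤ t) (v : ℕ → ℝ) :
    (comp Φ Γ).layer (Φ.hidden + t) v = Γ.layer t v := by
  funext i
  have hsub : Φ.hidden + t - Φ.hidden = t := by omega
  have hW : ∀ j, (comp Φ Γ).W (Φ.hidden + t) i j = Γ.W t i j := by
    intro j
    simp only [comp]
    rw [if_neg (by omega), if_neg (by omega), hsub]
  have hB : (comp Φ Γ).B (Φ.hidden + t) i = Γ.B t i := by
    simp only [comp]
    rw [if_neg (by omega), if_neg (by omega), hsub]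
  simp only [ANN.layer, comp_dims_high Φ Γ (show Φ.hidden < Φ.hidden + t by omega), hsub, hW, hB]

lemma comp_fwd_high (a : ℝ → ℝ) (Φ Γ : ANN) (z : ℕ → ℝ) :
    ∀ t, (comp Φ Γ).fwd a (Φ.hidden + 1 + t) z = Γ.fwd a (1 + t) (Φ.realize a z) := by
  intro t
  induction t with
  | zero =>
    funext i
    simp only [ANN.fwd]
    rw [comp_fwd_low a Φ Γ z Φ.hidden (le_refl _)]
    rw [comp_layer_merge]
    rfl
  | succ t ih =>
    have h1 : Φ.hidden + 1 + (t + 1) = (Φ.hidden + 1 + t) + 1 := by omega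
    have h2 : 1 + (t + 1) = (1 + t) + 1 := by omega
    rw [h1, h2]
    funext i
    simp only [ANN.fwd]
    rw [ih]
    rw [show Φ.hidden + 1 + t = Φ.hidden + (1 + t) by omega,
      comp_layer_high Φ Γ (1 + t) (by omega)]

lemma comp_realize (a : ℝ → ℝ) (Φ Γ : ANN) (z : ℕ → ℝ) :
    (comp Φ Γ).realize a z = Γ.realize a (Φ.realize a z) := by
  unfold ANN.realize
  have hch : (comp Φ Γ).hidden = Φ.hidden + Γ.hidden := rfl
  rw [hch]
  rcases Nat.eq_zero_or_pos Γ.hidden with h0 | h0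
  · rw [h0]
    funext i
    rw [Nat.add_zero, comp_fwd_low a Φ Γ z Φ.hidden (le_refl _), comp_layer_merge]
    rfl
  · have hg : 1 + (Γ.hidden - 1) = Γ.hidden := by omega
    have hfwd : (comp Φ Γ).fwd a (Φ.hidden + Γ.hidden) z = Γ.fwd a Γ.hidden (Φ.realize a z) := by
      rw [show Φ.hidden + Γ.hidden = Φ.hidden + 1 + (Γ.hidden - 1) by omega, comp_fwd_high, hg]
    rw [hfwd, comp_layer_high Φ Γ Γ.hidden h0]
    rfl

lemma comp_params (Φ Γ : ANN) :
    (comp Φ Γ).params + Φ.dims (Φ.hidden + 1) * (Φ.dims Φ.hidden + 1)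
      = Φ.params + Γ.dims 1 * (Φ.dims Φ.hidden + 1)
        + ∑ t ∈ Finset.range Γ.hidden, Γ.dims (t + 2) * (Γ.dims (t + 1) + 1) := by
  unfold ANN.params
  have hh : (comp Φ Γ).hidden + 1 = (Φ.hidden + 1) + Γ.hidden := by simp [comp]; omega
  rw [hh, Finset.sum_range_add, Finset.sum_range_succ]
  have e1 : ∀ k ∈ Finset.range Φ.hidden,
      (comp Φ Γ).dims (k + 1) * ((comp Φ Γ).dims k + 1) = Φ.dims (k + 1) * (Φ.dims k + 1) := by
    intro k hk
    rw [Finset.mem_range] at hk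
    rw [comp_dims_low Φ Γ (by omega), comp_dims_low Φ Γ (by omega)]
  rw [Finset.sum_congr rfl e1]
  have e2 : (comp Φ Γ).dims (Φ.hidden + 1) * ((comp Φ Γ).dims Φ.hidden + 1)
      = Γ.dims 1 * (Φ.dims Φ.hidden + 1) := by
    rw [comp_dims_high Φ Γ (by omega), comp_dims_low Φ Γ (le_refl _)]
    simp
  rw [e2]
  have e3 : ∀ t ∈ Finset.range Γ.hidden,
      (comp Φ Γ).dims (Φ.hidden + 1 + t + 1) * ((comp Φ Γ).dims (Φ.hidden + 1 + t) + 1)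
        = Γ.dims (t + 2) * (Γ.dims (t + 1) + 1) := by
    intro t _
    rw [comp_dims_high Φ Γ (by omega), comp_dims_high Φ Γ (by omega)]
    congr 3 <;> omega
  rw [Finset.sum_congr rfl e3]
  rw [Finset.sum_range_succ]
  ring

/-! ### Degenerate output networks -/

/-- The affine network `z ↦ z + c` (on the first `d` coordinates). -/
def affineId (d : ℕ) (c : ℕ → ℝ) : ANN :=
  ⟨0, fun _ => d, fun _ i j => if i = j then 1 else 0, fun _ i => c i⟩

lemma affineId_realize (a : ℝ → ℝ) (d : ℕ) (c : ℕ → ℝ) (z : ℕ → ℝ) (i : ℕ) (hi : i < d) :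
    (affineId d c).realize a z i = z i + c i := by
  unfold ANN.realize
  show (affineId d c).layer 0 z i = z i + c i
  simp only [ANN.layer, affineId, ite_mul, one_mul, zero_mul]
  rw [Finset.sum_ite_eq]
  simp [Finset.mem_range.mpr hi]

/-- The affine network `z ↦ z + A z + b` built from a depth-one network `F`. -/
def affinePlus (d : ℕ) (F : ANN) : ANN :=
  ⟨0, fun _ => d, fun _ i j => (if i = j then 1 else 0) + F.W 0 i j, fun _ i => F.B 0 i⟩

lemma affinePlus_realize (a : ℝ → ℝ) (d : ℕ) (F : ANN) (hF : F.hidden = 0)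
    (hFin : F.dims 0 = d) (z : ℕ → ℝ) (i : ℕ) (hi : i < d) :
    (affinePlus d F).realize a z i = z i + F.realize a z i := by
  unfold ANN.realize
  rw [hF]
  show (affinePlus d F).layer 0 z i = z i + F.layer 0 z i
  simp only [ANN.layer, affinePlus, hFin, add_mul, Finset.sum_add_distrib, ite_mul, one_mul,
    zero_mul]
  rw [Finset.sum_ite_eq]
  simp only [Finset.mem_range.mpr hi, if_true]
  ring

/-! ### The skip-connection network -/

/-- The "skip-connection" network computing `z ↦ z + R_a(F)(z)`, built by running `F`
in parallel with a chain of copies of the identity network `I`. -/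
def skip (d i₀ : ℕ) (F I : ANN) : ANN where
  hidden := F.hidden
  dims := fun t => if t = 0 then d else if t ≤ F.hidden then F.dims t + i₀ else d
  W := fun k i j =>
    if k = 0 then (if i < F.dims 1 then F.W 0 i j else I.W 0 (i - F.dims 1) j)
    else if k = F.hidden then
      (if j < F.dims F.hidden then F.W F.hidden i j else I.W 1 i (j - F.dims F.hidden))
    else
      if i < F.dims (k + 1) then (if j < F.dims k then F.W k i j else 0)
      else (if j < F.dims k then 0
            else ∑ m ∈ Finset.range d, I.W 0 (i - F.dims (k + 1)) m * I.W 1 m (j - F.dims k))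
  B := fun k i =>
    if k = 0 then (if i < F.dims 1 then F.B 0 i else I.B 0 (i - F.dims 1))
    else if k = F.hidden then F.B F.hidden i + I.B 1 i
    else
      if i < F.dims (k + 1) then F.B k i
      else (∑ m ∈ Finset.range d, I.W 0 (i - F.dims (k + 1)) m * I.B 1 m)
        + I.B 0 (i - F.dims (k + 1))

section Skip

variable (a : ℝ → ℝ) (d i₀ : ℕ) (F I : ANN)
  (hFin : F.dims 0 = d) (hIh : I.hidden = 1) (hI0 : I.dims 0 = d) (hI1 : I.dims 1 = i₀)
  (idreal : ∀ z : ℕ → ℝ, ∀ i, i < d → I.realize a z i = z i)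

include hFin hIh hI0 hI1 idreal

set_option linter.unusedSectionVars false in
set_option linter.unusedVariables false in
lemma skip_fwd (hF : 1 ≤ F.hidden) (z : ℕ → ℝ) :
    ∀ t, 1 ≤ t → t ≤ F.hidden →
    ∃ w : ℕ → ℝ, (∀ m, m < d → w m = z m) ∧
      (∀ i, (skip d i₀ F I).fwd a t z i =
        if i < F.dims t then F.fwd a t z i else a (I.layer 0 w (i - F.dims t))) := by
  intro t
  induction t with
  | zero => omega
  | succ t ih =>
    intro _ hle
    rcases Nat.eq_zero_or_pos t with rfl | ht
    · -- base case t+1 = 1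
      refine ⟨z, fun m _ => rfl, fun i => ?_⟩
      simp only [ANN.fwd]
      by_cases hi : i < F.dims 1
      · rw [if_pos hi]
        simp [ANN.fwd, ANN.layer, skip, hFin, hi]
      · rw [if_neg hi]
        simp [ANN.fwd, ANN.layer, skip, hI0, hi]
    · -- inductive step
      obtain ⟨w, hw, hv⟩ := ih ht (by omega)
      set u : ℕ → ℝ := fun j => a (I.layer 0 w j) with hu
      have hreal : I.layer 1 u = I.realize a w := by
        unfold ANN.realize
        rw [hIh]
        rfl
      refine ⟨I.layer 1 u, ?_, ?_⟩
      · intro m hm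
        rw [hreal, idreal w m hm, hw m hm]
      · intro i
        have ht0 : t ≠ 0 := by omega
        have hth : t ≠ F.hidden := by omega
        have hdimst : (skip d i₀ F I).dims t = F.dims t + i₀ := by
          simp [skip, ht0, (by omega : t ≤ F.hidden)]
        simp only [ANN.fwd]
        simp only [ANN.layer, hdimst]
        rw [Finset.sum_range_add]
        by_cases hi : i < F.dims (t + 1)
        · rw [if_pos hi]
          have e1 : ∀ j ∈ Finset.range (F.dims t),
              (skip d i₀ F I).W t i j * (skip d i₀ F I).fwd a t z j
                = F.W t i j * F.fwd a t z j := by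
            intro j hj
            rw [Finset.mem_range] at hj
            rw [hv j, if_pos hj]
            simp only [skip, if_neg ht0, if_neg hth, if_pos hi, if_pos hj]
          have e2 : ∀ j ∈ Finset.range i₀,
              (skip d i₀ F I).W t i (F.dims t + j) * (skip d i₀ F I).fwd a t z (F.dims t + j)
                = 0 := by
            intro j _
            simp only [skip, if_neg ht0, if_neg hth, if_pos hi,
              if_neg (by omega : ¬ F.dims t + j < F.dims t)]
            ring
          rw [Finset.sum_congr rfl e1, Finset.sum_congr rfl e2, Finset.sum_const_zero]
          have eB : (skip d i₀ F I).B t i = F.B t i := by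
            simp only [skip, if_neg ht0, if_neg hth, if_pos hi]
          rw [eB, add_zero]
        · rw [if_neg hi]
          have e1 : ∀ j ∈ Finset.range (F.dims t),
              (skip d i₀ F I).W t i j * (skip d i₀ F I).fwd a t z j = 0 := by
            intro j hj
            rw [Finset.mem_range] at hj
            simp only [skip, if_neg ht0, if_neg hth, if_neg hi, if_pos hj]
            ring
          have e2 : ∀ j ∈ Finset.range i₀,
              (skip d i₀ F I).W t i (F.dims t + j) * (skip d i₀ F I).fwd a t z (F.dims t + j)
                = (∑ m ∈ Finset.range d, I.W 0 (i - F.dims (t + 1)) m * I.W 1 m j) * u j := by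
            intro j _
            rw [hv (F.dims t + j), if_neg (by omega : ¬ F.dims t + j < F.dims t)]
            simp only [skip, if_neg ht0, if_neg hth, if_neg hi,
              if_neg (by omega : ¬ F.dims t + j < F.dims t), Nat.add_sub_cancel_left]
            rfl
          rw [Finset.sum_congr rfl e1, Finset.sum_congr rfl e2, Finset.sum_const_zero, zero_add]
          have eB : (skip d i₀ F I).B t i
              = (∑ m ∈ Finset.range d, I.W 0 (i - F.dims (t + 1)) m * I.B 1 m)
                + I.B 0 (i - F.dims (t + 1)) := by
            simp only [skip, if_neg ht0, if_neg hth, if_neg hi]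
          rw [eB]
          congr 1
          simp only [ANN.layer, hI0, hI1]
          simp only [mul_add, Finset.mul_sum, Finset.sum_add_distrib, Finset.sum_mul]
          rw [Finset.sum_comm]
          ring_nf

set_option linter.unusedSectionVars false in
set_option linter.unusedVariables false in
lemma skip_realize (hF : 1 ≤ F.hidden) (z : ℕ → ℝ) :
    ∀ i, i < d → (skip d i₀ F I).realize a z i = F.realize a z i + z i := by
  intro i hid
  obtain ⟨w, hw, hv⟩ := skip_fwd a d i₀ F I hFin hIh hI0 hI1 idreal hF z F.hidden hF (le_refl _)
  set u : ℕ → ℝ := fun j => a (I.layer 0 w j) with hu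
  have hreal : I.layer 1 u = I.realize a w := by
    unfold ANN.realize
    rw [hIh]
    rfl
  unfold ANN.realize
  have hsh : (skip d i₀ F I).hidden = F.hidden := rfl
  rw [hsh]
  have hh0 : F.hidden ≠ 0 := by omega
  have hdimsh : (skip d i₀ F I).dims F.hidden = F.dims F.hidden + i₀ := by
    simp only [skip]
    rw [if_neg hh0, if_pos (le_refl F.hidden)]
  simp only [ANN.layer, hdimsh]
  rw [Finset.sum_range_add]
  have e1 : ∀ j ∈ Finset.range (F.dims F.hidden),
      (skip d i₀ F I).W F.hidden i j * (skip d i₀ F I).fwd a F.hidden z j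
        = F.W F.hidden i j * F.fwd a F.hidden z j := by
    intro j hj
    rw [Finset.mem_range] at hj
    rw [hv j, if_pos hj]
    simp only [skip, if_neg hh0, if_pos rfl, if_pos hj, if_true, eq_self_iff_true]
  have e2 : ∀ j ∈ Finset.range i₀,
      (skip d i₀ F I).W F.hidden i (F.dims F.hidden + j)
          * (skip d i₀ F I).fwd a F.hidden z (F.dims F.hidden + j)
        = I.W 1 i j * u j := by
    intro j _
    rw [hv (F.dims F.hidden + j), if_neg (by omega : ¬ F.dims F.hidden + j < F.dims F.hidden)]
    simp only [skip, if_neg hh0, if_pos rfl, if_true, eq_self_iff_true,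
      if_neg (by omega : ¬ F.dims F.hidden + j < F.dims F.hidden), Nat.add_sub_cancel_left]
    rfl
  have eB : (skip d i₀ F I).B F.hidden i = F.B F.hidden i + I.B 1 i := by
    simp only [skip, if_neg hh0, if_pos rfl, if_true, eq_self_iff_true]
  rw [Finset.sum_congr rfl e1, Finset.sum_congr rfl e2, eB]
  have hlay : (∑ j ∈ Finset.range i₀, I.W 1 i j * u j) + I.B 1 i = I.layer 1 u i := by
    simp [ANN.layer, hI1]
  have hz : (∑ j ∈ Finset.range i₀, I.W 1 i j * u j) + I.B 1 i = z i := by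
    rw [hlay, hreal, idreal w i hid, hw i hid]
  linear_combination hz

end Skip

/-! ### The arithmetic bound -/

lemma final_ineq (S P1 m d i₀ : ℕ) (h1 : 2*S ≤ P1) (h2 : m + 2 ≤ S) (h3 : 2 ≤ i₀)
    (h4 : i₀ ≤ 2*d) (h5 : 1 ≤ d) :
    4*((S+i₀)*(S+i₀+1) + P1 + (i₀+1)*S + i₀*S + m*(i₀*(i₀+1)) + S*(S+i₀+1))
      ≤ (i₀*(d+1)+d*(i₀+1)+2*P1)^2 := by
  zify at *
  nlinarith [sq_nonneg ((P1:ℤ) - 2*S), mul_le_mul_of_nonneg_left h4 (by positivity : (0:ℤ) ≤ i₀),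
    mul_le_mul_of_nonneg_left h1 (by positivity : (0:ℤ) ≤ P1),
    mul_le_mul_of_nonneg_left h2 (by positivity : (0:ℤ) ≤ i₀*(i₀+1)),
    mul_le_mul_of_nonneg_left h1 (by positivity : (0:ℤ) ≤ i₀),
    mul_pos (by positivity : (0:ℤ) < i₀) (by positivity : (0:ℤ) < d),
    sq_nonneg ((i₀:ℤ) - 2), sq_nonneg ((S:ℤ) - i₀), sq_nonneg ((P1:ℤ) - i₀*S)]

lemma key_ineq (d i₀ m : ℕ) (l : ℕ → ℕ) (hd : 1 ≤ d) (hi₀ : 2 ≤ i₀) (hi₀2 : i₀ ≤ 2*d)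
    (hl0 : l 0 = d) (hlast : l (m+2) = d) (hpos : ∀ t, 1 ≤ t → t ≤ m+1 → 1 ≤ l t) :
    4 * ((l 1 + i₀) * (l (m+1) + i₀ + 1)
        + ((∑ t ∈ Finset.range m, (l (t+2) + i₀) * (l (t+1) + i₀ + 1))
          + d * (l (m+1) + i₀ + 1)))
      ≤ (i₀*(d+1) + d*(i₀+1) + 2 * ∑ k ∈ Finset.range (m+2), l (k+1) * (l k + 1))^2 := by
  set P1 := ∑ k ∈ Finset.range (m+2), l (k+1) * (l k + 1) with hP1
  set S := ∑ k ∈ Finset.range (m+2), l (k+1) with hS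
  have hposall : ∀ k ∈ Finset.range (m+2), 1 ≤ l (k+1) := by
    intro k hk
    rw [Finset.mem_range] at hk
    by_cases h : k + 1 ≤ m + 1
    · exact hpos (k+1) (by omega) h
    · have : k + 1 = m + 2 := by omega
      rw [this, hlast]; exact hd
  have h2S : 2*S ≤ P1 := by
    rw [hS, hP1, Finset.mul_sum]
    apply Finset.sum_le_sum
    intro k hk
    rw [Finset.mem_range] at hk
    have h1k : 1 ≤ l k := by
      rcases Nat.eq_zero_or_pos k with rfl | hk0
      · rw [hl0]; exact hd
      · exact hpos k hk0 (by omega)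
    calc 2 * l (k+1) = l (k+1) * 2 := by ring
      _ ≤ l (k+1) * (l k + 1) := Nat.mul_le_mul_left _ (by omega)
  have hmS : m + 2 ≤ S := by
    rw [hS]
    calc m + 2 = ∑ _k ∈ Finset.range (m+2), 1 := by simp
      _ ≤ _ := Finset.sum_le_sum hposall
  have hl1S : l 1 ≤ S := by
    rw [hS]
    exact Finset.single_le_sum (f := fun k => l (k+1)) (fun _ _ => Nat.zero_le _)
      (Finset.mem_range.mpr (by omega : 0 < m + 2))
  have hlm1S : l (m+1) ≤ S := by
    rw [hS]
    exact Finset.single_le_sum (f := fun k => l (k+1)) (fun _ _ => Nat.zero_le _)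
      (Finset.mem_range.mpr (by omega : m < m + 2))
  have hdS : d ≤ S := by
    rw [hS, ← hlast]
    exact Finset.single_le_sum (f := fun k => l (k+1)) (fun _ _ => Nat.zero_le _)
      (Finset.mem_range.mpr (by omega : m + 1 < m + 2))
  have shift_le : ∀ f : ℕ → ℕ,
      (∑ t ∈ Finset.range m, f (t+1)) ≤ ∑ k ∈ Finset.range (m+2), f k := by
    intro f
    have e : ∑ t ∈ Finset.range m, f (t+1) = ∑ k ∈ Finset.Ico 1 (m+1), f k := by
      rw [Finset.sum_Ico_eq_sum_range]
      simp [add_comm]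
    rw [e]
    apply Finset.sum_le_sum_of_subset
    intro x hx
    simp only [Finset.mem_Ico, Finset.mem_range] at *
    omega
  have hT : (∑ t ∈ Finset.range m, l (t+2) * l (t+1)) ≤ P1 := by
    calc ∑ t ∈ Finset.range m, l (t+2) * l (t+1)
        ≤ ∑ t ∈ Finset.range m, l (t+2) * (l (t+1) + 1) :=
          Finset.sum_le_sum fun t _ => Nat.mul_le_mul_left _ (by omega)
      _ ≤ ∑ k ∈ Finset.range (m+2), l (k+1) * (l k + 1) :=
          shift_le (fun k => l (k+1) * (l k + 1))
  have hSa : (∑ t ∈ Finset.range m, l (t+2)) ≤ S := shift_le (fun k => l (k+1))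
  have hSb : (∑ t ∈ Finset.range m, l (t+1)) ≤ S := by
    rw [hS]
    apply Finset.sum_le_sum_of_subset
    intro x hx
    simp only [Finset.mem_range] at *
    omega
  have hmid : ∑ t ∈ Finset.range m, (l (t+2) + i₀) * (l (t+1) + i₀ + 1)
      = (∑ t ∈ Finset.range m, l (t+2) * l (t+1))
        + ((i₀+1) * ∑ t ∈ Finset.range m, l (t+2))
        + (i₀ * ∑ t ∈ Finset.range m, l (t+1)) + m * (i₀ * (i₀+1)) := by
    rw [Finset.mul_sum, Finset.mul_sum]
    rw [show m * (i₀ * (i₀ + 1)) = ∑ _t ∈ Finset.range m, i₀ * (i₀+1) by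
      simp [Finset.sum_const, mul_comm]]
    rw [← Finset.sum_add_distrib, ← Finset.sum_add_distrib, ← Finset.sum_add_distrib]
    exact Finset.sum_congr rfl fun t _ => by ring
  have b1 : (l 1 + i₀) * (l (m+1) + i₀ + 1) ≤ (S+i₀)*(S+i₀+1) :=
    Nat.mul_le_mul (by omega) (by omega)
  have b2 : d * (l (m+1) + i₀ + 1) ≤ S * (S+i₀+1) := Nat.mul_le_mul (by omega) (by omega)
  have b3 : (i₀+1) * (∑ t ∈ Finset.range m, l (t+2)) ≤ (i₀+1)*S := Nat.mul_le_mul_left _ hSa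
  have b4 : i₀ * (∑ t ∈ Finset.range m, l (t+1)) ≤ i₀*S := Nat.mul_le_mul_left _ hSb
  have hfin := final_ineq S P1 m d i₀ h2S hmS hi₀ hi₀2 hd
  rw [hmid]
  linarith [hfin, b1, b2, b3, b4, hT]

end ANNAux

/-- (Lemma 3.19, sum with a skip connection) Given an activation `a`, a network `𝕀` with
architecture `(d, 𝔦, d)` realizing the identity on `ℝ^d` (with `2 ≤ 𝔦 ≤ 2d`), and
networks `Φ₁, Φ₂` with input and output dimension `d` satisfying
`l_{2,L₂-1} ≤ l_{1,L₁-1} + 𝔦`, there exists a network `Ψ` with continuous realization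
`x ↦ (R_a(Φ₂))(x) + (R_a(Φ₁))((R_a(Φ₂))(x))`, penultimate layer width at most
`l_{1,L₁-1} + 𝔦`, and `P(Ψ) ≤ P(Φ₂) + (½ P(𝕀) + P(Φ₁))²`. -/
theorem composition_sum (a : ℝ → ℝ) (ha : Continuous a) (d i₀ : ℕ) (hd : 0 < d)
    (hi₀ : 2 ≤ i₀) (hi₀' : i₀ ≤ 2 * d) (Id Φ₁ Φ₂ : ANN)
    (hIdarch : Id.arch = [d, i₀, d])
    (hIdreal : ∀ x : Fin d → ℝ, Id.realizeFun a d d x = x)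
    (h1in : Φ₁.dims 0 = d) (h1out : Φ₁.dims Φ₁.depth = d)
    (h2in : Φ₂.dims 0 = d) (h2out : Φ₂.dims Φ₂.depth = d)
    (hwidth : Φ₂.dims Φ₂.hidden ≤ Φ₁.dims Φ₁.hidden + i₀) :
    ∃ Ψ : ANN,
      Ψ.dims 0 = d ∧ Ψ.dims Ψ.depth = d ∧
      Continuous (Ψ.realizeFun a d d) ∧
      (∀ x : Fin d → ℝ,
        Ψ.realizeFun a d d x
          = fun i => Φ₂.realizeFun a d d x i
              + Φ₁.realizeFun a d d (Φ₂.realizeFun a d d x) i) ∧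
      Ψ.dims Ψ.hidden ≤ Φ₁.dims Φ₁.hidden + i₀ ∧
      (Ψ.params : ℝ) ≤ (Φ₂.params : ℝ) + ((Id.params : ℝ) / 2 + (Φ₁.params : ℝ)) ^ 2 := by
  classical
  -- structure of the identity network
  have hlen := congrArg List.length hIdarch
  simp only [ANN.arch, ANN.depth, List.length_map, List.length_range, List.length_cons,
    List.length_nil] at hlen
  have hIdh : Id.hidden = 1 := by omega
  unfold ANN.arch ANN.depth at hIdarch
  rw [hIdh] at hIdarch
  have hr3 : List.range (1 + 1 + 1) = [0, 1, 2] := rfl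
  rw [hr3] at hIdarch
  simp only [List.map_cons, List.map_nil, List.cons.injEq, and_true] at hIdarch
  obtain ⟨hd0, hd1, hd2⟩ := hIdarch
  -- the identity network realizes the identity on the first d coordinates of any input
  have idreal : ∀ z : ℕ → ℝ, ∀ i, i < d → Id.realize a z i = z i := by
    intro z i hi
    have h1 := congrFun (hIdreal (fun j => z j.val)) ⟨i, hi⟩
    simp only [ANN.realizeFun] at h1
    have h2 : Id.realize a (fun j => if h : j < d then z j else 0) = Id.realize a z := by
      apply ANNAux.realize_congr
      intro j hj
      rw [hd0] at hj
      simp [hj]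
    rw [← h2]
    exact h1
  have hPId : Id.params = i₀ * (d + 1) + d * (i₀ + 1) := by
    unfold ANN.params
    rw [hIdh]
    simp [Finset.sum_range_succ, hd0, hd1, hd2]
  have hsq : (0:ℝ) ≤ ((Id.params : ℝ) / 2 + (Φ₁.params : ℝ)) ^ 2 := sq_nonneg _
  -- bridging: applying Φ₁ to the truncated-padded output of Φ₂ is the same as applying it
  -- to the full output
  have bridge : ∀ x : Fin d → ℝ, ∀ i : Fin d,
      Φ₁.realizeFun a d d (Φ₂.realizeFun a d d x) i
        = Φ₁.realize a (Φ₂.realize a (fun j => if h : j < d then x ⟨j, h⟩ else 0)) i.val := by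
    intro x i
    simp only [ANN.realizeFun]
    apply congrFun
    apply ANNAux.realize_congr
    intro j hj
    rw [h1in] at hj
    simp only [hj, dif_pos]
  have hout2 : Φ₂.dims (Φ₂.hidden + 1) = d := h2out
  by_cases hA : Φ₁.hidden = 0
  · -- Φ₁ is a single affine layer: absorb the identity into it
    set Γ := ANNAux.affinePlus d Φ₁ with hΓdef
    refine ⟨ANNAux.comp Φ₂ Γ, ?_, ?_, ANNAux.continuous_realizeFun a ha _ d d, ?_, ?_, ?_⟩
    · rw [ANNAux.comp_dims_low Φ₂ Γ (Nat.zero_le _)]; exact h2in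
    · show (ANNAux.comp Φ₂ Γ).dims ((Φ₂.hidden + Γ.hidden) + 1) = d
      rw [ANNAux.comp_dims_high Φ₂ Γ (by omega)]
      rfl
    · intro x
      funext i
      show (ANNAux.comp Φ₂ Γ).realize a _ i.val = _
      rw [congrFun (ANNAux.comp_realize a Φ₂ Γ _) i.val]
      rw [ANNAux.affinePlus_realize a d Φ₁ hA h1in _ i.val i.isLt]
      rw [bridge x i]
      rfl
    · show (ANNAux.comp Φ₂ Γ).dims (Φ₂.hidden + Γ.hidden) ≤ _
      have : Γ.hidden = 0 := rfl
      rw [this, Nat.add_zero, ANNAux.comp_dims_low Φ₂ Γ (le_refl _)]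
      exact hwidth
    · have hcp := ANNAux.comp_params Φ₂ Γ
      have hΓ1 : Γ.dims 1 = d := rfl
      have hΓh : Γ.hidden = 0 := rfl
      rw [hΓ1, hΓh, hout2] at hcp
      simp only [Finset.range_zero, Finset.sum_empty, Nat.add_zero] at hcp
      have hPP : (ANNAux.comp Φ₂ Γ).params = Φ₂.params := by omega
      rw [hPP]
      linarith [hsq]
  · by_cases hB : ∃ t, 1 ≤ t ∧ t ≤ Φ₁.hidden ∧ Φ₁.dims t = 0
    · -- some hidden layer of Φ₁ has width 0, so R_a(Φ₁) is constant
      obtain ⟨t, ht1, ht2, ht0⟩ := hB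
      set c : ℕ → ℝ := Φ₁.realize a (fun _ => 0) with hc
      set Γ := ANNAux.affineId d c with hΓdef
      refine ⟨ANNAux.comp Φ₂ Γ, ?_, ?_, ANNAux.continuous_realizeFun a ha _ d d, ?_, ?_, ?_⟩
      · rw [ANNAux.comp_dims_low Φ₂ Γ (Nat.zero_le _)]; exact h2in
      · show (ANNAux.comp Φ₂ Γ).dims ((Φ₂.hidden + Γ.hidden) + 1) = d
        rw [ANNAux.comp_dims_high Φ₂ Γ (by omega)]
        rfl
      · intro x
        funext i
        show (ANNAux.comp Φ₂ Γ).realize a _ i.val = _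
        rw [congrFun (ANNAux.comp_realize a Φ₂ Γ _) i.val]
        rw [ANNAux.affineId_realize a d c _ i.val i.isLt]
        rw [bridge x i]
        rw [ANNAux.realize_const a Φ₁ ht2 ht0 _ (fun _ => 0)]
        rfl
      · show (ANNAux.comp Φ₂ Γ).dims (Φ₂.hidden + Γ.hidden) ≤ _
        have : Γ.hidden = 0 := rfl
        rw [this, Nat.add_zero, ANNAux.comp_dims_low Φ₂ Γ (le_refl _)]
        exact hwidth
      · have hcp := ANNAux.comp_params Φ₂ Γ
        have hΓ1 : Γ.dims 1 = d := rfl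
        have hΓh : Γ.hidden = 0 := rfl
        rw [hΓ1, hΓh, hout2] at hcp
        simp only [Finset.range_zero, Finset.sum_empty, Nat.add_zero] at hcp
        have hPP : (ANNAux.comp Φ₂ Γ).params = Φ₂.params := by omega
        rw [hPP]
        linarith [hsq]
    · -- the main case
      push_neg at hB
      obtain ⟨m, hm⟩ : ∃ m, Φ₁.hidden = m + 1 := ⟨Φ₁.hidden - 1, by omega⟩
      have hpos : ∀ t, 1 ≤ t → t ≤ m + 1 → 1 ≤ Φ₁.dims t := by
        intro t h1 h2
        have := hB t h1 (by omega)
        omega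
      set Γ := ANNAux.skip d i₀ Φ₁ Id with hΓdef
      have hΓh : Γ.hidden = Φ₁.hidden := rfl
      have hΓd : ∀ t, 1 ≤ t → t ≤ m + 1 → Γ.dims t = Φ₁.dims t + i₀ := by
        intro t h1 h2
        show (if t = 0 then d else if t ≤ Φ₁.hidden then Φ₁.dims t + i₀ else d) = _
        rw [if_neg (by omega), if_pos (by omega)]
      have hΓtop : ∀ t, Φ₁.hidden < t → Γ.dims t = d := by
        intro t h1
        show (if t = 0 then d else if t ≤ Φ₁.hidden then Φ₁.dims t + i₀ else d) = _
        rw [if_neg (by omega), if_neg (by omega)]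
      refine ⟨ANNAux.comp Φ₂ Γ, ?_, ?_, ANNAux.continuous_realizeFun a ha _ d d, ?_, ?_, ?_⟩
      · rw [ANNAux.comp_dims_low Φ₂ Γ (Nat.zero_le _)]; exact h2in
      · show (ANNAux.comp Φ₂ Γ).dims ((Φ₂.hidden + Γ.hidden) + 1) = d
        rw [ANNAux.comp_dims_high Φ₂ Γ (by omega)]
        rw [show Φ₂.hidden + Γ.hidden + 1 - Φ₂.hidden = Γ.hidden + 1 by omega]
        exact hΓtop (Γ.hidden + 1) (by omega)
      · intro x
        funext i
        show (ANNAux.comp Φ₂ Γ).realize a _ i.val = _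
        rw [congrFun (ANNAux.comp_realize a Φ₂ Γ _) i.val]
        rw [ANNAux.skip_realize a d i₀ Φ₁ Id h1in hIdh hd0 hd1 idreal (by omega) _ i.val i.isLt]
        rw [bridge x i]
        show Φ₁.realize a _ i.val + Φ₂.realize a _ i.val = Φ₂.realizeFun a d d x i + _
        rw [add_comm]
        rfl
      · show (ANNAux.comp Φ₂ Γ).dims (Φ₂.hidden + Γ.hidden) ≤ _
        rw [ANNAux.comp_dims_high Φ₂ Γ (by rw [hΓh, hm]; omega)]
        rw [show Φ₂.hidden + Γ.hidden - Φ₂.hidden = Γ.hidden by omega, hΓh]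
        rw [hΓd Φ₁.hidden (by omega) (by omega)]
      · -- parameter count
        have hcp := ANNAux.comp_params Φ₂ Γ
        have hΓhm : Γ.hidden = m + 1 := by rw [hΓh, hm]
        have hsum : (∑ t ∈ Finset.range Γ.hidden, Γ.dims (t + 2) * (Γ.dims (t + 1) + 1))
            = (∑ t ∈ Finset.range m, (Φ₁.dims (t+2) + i₀) * (Φ₁.dims (t+1) + i₀ + 1))
              + d * (Φ₁.dims (m+1) + i₀ + 1) := by
          rw [hΓhm, Finset.sum_range_succ]
          congr 1
          · apply Finset.sum_congr rfl
            intro t ht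
            rw [Finset.mem_range] at ht
            rw [hΓd (t+2) (by omega) (by omega), hΓd (t+1) (by omega) (by omega)]
          · rw [hΓtop (m+2) (by omega), hΓd (m+1) (by omega) (by omega)]
        have hΓ1 : Γ.dims 1 = Φ₁.dims 1 + i₀ := hΓd 1 (le_refl _) (by omega)
        have hwidth' : Φ₂.dims Φ₂.hidden ≤ Φ₁.dims (m+1) + i₀ := by
          rw [← hm]; exact hwidth
        have h2w : Γ.dims 1 * (Φ₂.dims Φ₂.hidden + 1)
            ≤ (Φ₁.dims 1 + i₀) * (Φ₁.dims (m+1) + i₀ + 1) := by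
          rw [hΓ1]
          exact Nat.mul_le_mul_left _ (by omega)
        have hlast : Φ₁.dims (m+2) = d := by
          have := h1out
          unfold ANN.depth at this
          rw [hm] at this
          exact this
        have hkey := ANNAux.key_ineq d i₀ m Φ₁.dims hd hi₀ hi₀' h1in hlast hpos
        have hP1e : Φ₁.params = ∑ k ∈ Finset.range (m+2), Φ₁.dims (k+1) * (Φ₁.dims k + 1) := by
          unfold ANN.params
          rw [hm]
        rw [hout2, hsum] at hcp
        have hfin : 4 * (ANNAux.comp Φ₂ Γ).params
            ≤ 4 * Φ₂.params + (Id.params + 2 * Φ₁.params)^2 := by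
          rw [hPId, hP1e]
          linarith [hcp, h2w, hkey, Nat.zero_le (d * (Φ₂.dims Φ₂.hidden + 1))]
        have hc : ((4 * (ANNAux.comp Φ₂ Γ).params : ℕ) : ℝ)
            ≤ ((4 * Φ₂.params + (Id.params + 2 * Φ₁.params)^2 : ℕ) : ℝ) := Nat.cast_le.mpr hfin
        push_cast at hc
        have e : ((Id.params : ℝ)/2 + (Φ₁.params : ℝ))^2
            = (((Id.params : ℝ) + 2*(Φ₁.params : ℝ))^2)/4 := by ring
        rw [e]
        linarith [hc]
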